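/- Uniqueness of the inserted particle value: Let f be C^2 with f'' > 0 on an interval containing all relevant values, and fix x2 < x23 < x3 and values u2, u3. Then the function B(u) = (x23 − x2)·a(u2,u) + (x3 − x23)·a(u,u3) is strictly increasing in u, hence the equation B(u) = (x3 − x2)·a(u2,u3) has at most one solution u23. -/
import Mathlib

/-- The nonlinear average, extended by `a(u,u) = u` on the diagonal. -/
noncomputable def nlAvgExt (f : ℝ → ℝ) (u1 u2 : ℝ) : ℝ :=
  if u1 = u2 then u1 else
    (∫ u in u1..u2, deriv (deriv f) u * u) / (∫ u in u1..u2, deriv (deriv f) u)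

section Helpers

variable {f : ℝ → ℝ} {uL uU : ℝ}

private lemma g_cont (hf : ContDiff ℝ 2 f) : Continuous (deriv (deriv f)) := by
  have h2 : ContDiff ℝ ((1:ℕ∞)+1) f := by exact_mod_cast hf
  have h1 : ContDiff ℝ (1:ℕ∞) (deriv f) := (contDiff_succ_iff_deriv.mp h2).2.2
  exact h1.continuous_deriv le_rfl

private lemma nlAvg_symm (f : ℝ → ℝ) (s t : ℝ) : nlAvgExt f s t = nlAvgExt f t s := by
  unfold nlAvgExt
  rcases eq_or_ne s t with h | h
  · simp [h]
  · rw [if_neg h, if_neg h.symm, intervalIntegral.integral_symm t s (f := fun u => deriv (deriv f) u * u),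
      intervalIntegral.integral_symm t s (f := fun u => deriv (deriv f) u), neg_div_neg_eq]

private lemma nlAvg_diag (f : ℝ → ℝ) (s : ℝ) : nlAvgExt f s s = s := by simp [nlAvgExt]

private lemma F_pos (hf : ContDiff ℝ 2 f)
    (hconv : ∀ u ∈ Set.Icc uL uU, 0 < deriv (deriv f) u)
    {s t : ℝ} (hs : uL ≤ s) (hst : s < t) (ht : t ≤ uU) :
    0 < ∫ u in s..t, deriv (deriv f) u := by
  apply intervalIntegral.intervalIntegral_pos_of_pos_on
    ((g_cont hf).intervalIntegrable s t)
  · intro x hx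
    exact hconv x ⟨le_trans hs hx.1.le, le_trans hx.2.le ht⟩
  · exact hst

private lemma avg_lower (hf : ContDiff ℝ 2 f)
    (hconv : ∀ u ∈ Set.Icc uL uU, 0 < deriv (deriv f) u)
    {s t : ℝ} (hs : uL ≤ s) (hst : s < t) (ht : t ≤ uU) :
    s * (∫ u in s..t, deriv (deriv f) u) < ∫ u in s..t, deriv (deriv f) u * u := by
  have hg := g_cont hf
  have hint1 : IntervalIntegrable (deriv (deriv f)) MeasureTheory.volume s t :=
    hg.intervalIntegrable s t
  have hint2 : IntervalIntegrable (fun u => deriv (deriv f) u * u) MeasureTheory.volume s t :=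
    (hg.mul continuous_id).intervalIntegrable s t
  have hpos : 0 < ∫ u in s..t, (deriv (deriv f) u * u - s * deriv (deriv f) u) := by
    apply intervalIntegral.intervalIntegral_pos_of_pos_on
      (hint2.sub (hint1.const_mul s))
    · intro x hx
      have h1 := hconv x ⟨le_trans hs hx.1.le, le_trans hx.2.le ht⟩
      nlinarith [hx.1]
    · exact hst
  rw [intervalIntegral.integral_sub hint2 (hint1.const_mul s),
    intervalIntegral.integral_const_mul] at hpos
  linarith

private lemma avg_upper (hf : ContDiff ℝ 2 f)
    (hconv : ∀ u ∈ Set.Icc uL uU, 0 < deriv (deriv f) u)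
    {s t : ℝ} (hs : uL ≤ s) (hst : s < t) (ht : t ≤ uU) :
    (∫ u in s..t, deriv (deriv f) u * u) < t * ∫ u in s..t, deriv (deriv f) u := by
  have hg := g_cont hf
  have hint1 : IntervalIntegrable (deriv (deriv f)) MeasureTheory.volume s t :=
    hg.intervalIntegrable s t
  have hint2 : IntervalIntegrable (fun u => deriv (deriv f) u * u) MeasureTheory.volume s t :=
    (hg.mul continuous_id).intervalIntegrable s t
  have hpos : 0 < ∫ u in s..t, (t * deriv (deriv f) u - deriv (deriv f) u * u) := by
    apply intervalIntegral.intervalIntegral_pos_of_pos_on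
      ((hint1.const_mul t).sub hint2)
    · intro x hx
      have h1 := hconv x ⟨le_trans hs hx.1.le, le_trans hx.2.le ht⟩
      nlinarith [hx.2]
    · exact hst
  rw [intervalIntegral.integral_sub (hint1.const_mul t) hint2,
    intervalIntegral.integral_const_mul] at hpos
  linarith

private lemma nlAvg_bounds (hf : ContDiff ℝ 2 f)
    (hconv : ∀ u ∈ Set.Icc uL uU, 0 < deriv (deriv f) u)
    {s t : ℝ} (hs : uL ≤ s) (hst : s < t) (ht : t ≤ uU) :
    s < nlAvgExt f s t ∧ nlAvgExt f s t < t := by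
  have hF := F_pos hf hconv hs hst ht
  rw [nlAvgExt, if_neg hst.ne]
  constructor
  · rw [lt_div_iff₀ hF]
    exact avg_lower hf hconv hs hst ht
  · rw [div_lt_iff₀ hF]
    exact avg_upper hf hconv hs hst ht

private lemma nlAvg_split (hf : ContDiff ℝ 2 f)
    (hconv : ∀ u ∈ Set.Icc uL uU, 0 < deriv (deriv f) u)
    {s m t : ℝ} (hs : uL ≤ s) (hsm : s < m) (hmt : m < t) (ht : t ≤ uU) :
    nlAvgExt f s m < nlAvgExt f s t ∧ nlAvgExt f s t < nlAvgExt f m t := by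
  have hsU : m ≤ uU := le_trans hmt.le ht
  have hmL : uL ≤ m := le_trans hs hsm.le
  have hg := g_cont hf
  have hint1 : IntervalIntegrable (deriv (deriv f)) MeasureTheory.volume s m :=
    hg.intervalIntegrable s m
  have hint1' : IntervalIntegrable (deriv (deriv f)) MeasureTheory.volume m t :=
    hg.intervalIntegrable m t
  have hint2 : IntervalIntegrable (fun u => deriv (deriv f) u * u) MeasureTheory.volume s m :=
    (hg.mul continuous_id).intervalIntegrable s m
  have hint2' : IntervalIntegrable (fun u => deriv (deriv f) u * u) MeasureTheory.volume m t :=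
    (hg.mul continuous_id).intervalIntegrable m t
  have hFadd : (∫ u in s..m, deriv (deriv f) u) + (∫ u in m..t, deriv (deriv f) u)
      = ∫ u in s..t, deriv (deriv f) u :=
    intervalIntegral.integral_add_adjacent_intervals hint1 hint1'
  have hGadd : (∫ u in s..m, deriv (deriv f) u * u) + (∫ u in m..t, deriv (deriv f) u * u)
      = ∫ u in s..t, deriv (deriv f) u * u :=
    intervalIntegral.integral_add_adjacent_intervals hint2 hint2'
  have hF1 := F_pos hf hconv hs hsm hsU
  have hF2 := F_pos hf hconv hmL hmt ht
  have hG1 := avg_upper hf hconv hs hsm hsU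
  have hG2 := avg_lower hf hconv hmL hmt ht
  rw [nlAvgExt, nlAvgExt, nlAvgExt, if_neg hsm.ne, if_neg hmt.ne,
    if_neg (hsm.trans hmt).ne, ← hFadd, ← hGadd]
  constructor
  · rw [div_lt_div_iff₀ hF1 (by linarith)]
    nlinarith [mul_lt_mul_of_pos_right hG1 hF2, mul_lt_mul_of_pos_left hG2 hF1]
  · rw [div_lt_div_iff₀ (by linarith) hF2]
    nlinarith [mul_lt_mul_of_pos_right hG1 hF2, mul_lt_mul_of_pos_left hG2 hF1]

/-- strict monotonicity in the second argument -/
private lemma nlAvg_mono (hf : ContDiff ℝ 2 f)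
    (hconv : ∀ u ∈ Set.Icc uL uU, 0 < deriv (deriv f) u)
    {v : ℝ} (hv : v ∈ Set.Icc uL uU) :
    StrictMonoOn (fun u => nlAvgExt f v u) (Set.Icc uL uU) := by
  intro u hu u' hu' huu'
  simp only
  rcases lt_trichotomy v u with h1 | h1 | h1
  · exact (nlAvg_split hf hconv hv.1 h1 huu' hu'.2).1
  · subst h1
    rw [nlAvg_diag]
    exact (nlAvg_bounds hf hconv hv.1 huu' hu'.2).1
  · rcases lt_trichotomy v u' with h2 | h2 | h2
    · have hL : nlAvgExt f v u < v := by
        rw [nlAvg_symm]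
        exact (nlAvg_bounds hf hconv hu.1 h1 hv.2).2
      have hR : v < nlAvgExt f v u' := (nlAvg_bounds hf hconv hv.1 h2 hu'.2).1
      linarith
    · subst h2
      rw [nlAvg_diag, nlAvg_symm]
      exact (nlAvg_bounds hf hconv hu.1 h1 hv.2).2
    · rw [nlAvg_symm f v u, nlAvg_symm f v u']
      exact (nlAvg_split hf hconv hu.1 huu' h2 hv.2).2

end Helpers

theorem insert_value_unique (f : ℝ → ℝ) (uL uU : ℝ) (hf : ContDiff ℝ 2 f)
    (hconv : ∀ u ∈ Set.Icc uL uU, 0 < deriv (deriv f) u)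
    (x2 x23 x3 : ℝ) (hx2 : x2 < x23) (hx3 : x23 < x3)
    (u2 u3 : ℝ) (h2 : u2 ∈ Set.Icc uL uU) (h3 : u3 ∈ Set.Icc uL uU) :
    StrictMonoOn (fun u => (x23 - x2) * nlAvgExt f u2 u + (x3 - x23) * nlAvgExt f u u3)
        (Set.Icc uL uU) ∧
      ∀ u ∈ Set.Icc uL uU, ∀ u' ∈ Set.Icc uL uU,
        (x23 - x2) * nlAvgExt f u2 u + (x3 - x23) * nlAvgExt f u u3
            = (x3 - x2) * nlAvgExt f u2 u3 →
          (x23 - x2) * nlAvgExt f u2 u' + (x3 - x23) * nlAvgExt f u' u3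
            = (x3 - x2) * nlAvgExt f u2 u3 →
          u = u' := by
  have hmono : StrictMonoOn
      (fun u => (x23 - x2) * nlAvgExt f u2 u + (x3 - x23) * nlAvgExt f u u3)
      (Set.Icc uL uU) := by
    intro u hu u' hu' huu'
    simp only
    have A := nlAvg_mono hf hconv h2 hu hu' huu'
    have B := nlAvg_mono hf hconv h3 hu hu' huu'
    simp only at A B
    rw [nlAvg_symm f u u3, nlAvg_symm f u' u3]
    nlinarith [A, B]
  refine ⟨hmono, fun u hu u' hu' hEq hEq' => ?_⟩
  exact hmono.injOn hu hu' (by rw [hEq, hEq'])
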